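/- Let x, y > 0 and 0 < p < 1. Set μ = δ_x, ν = p·δ₀ + (1−p)·δ_y, and λ = p·δ₀ + (1−p)·δ_{y(p + x(1−p))}. Then for all z ∈ ℂ⁺: G_λ(z) = G_ν(z) − W_ν(z)²/(z·G_ν(z)−1) + [W_ν(z)²/(z·G_ν(z)−1)²] · G_μ(z·G_ν(z)/(z·G_ν(z)−1)), where W_ν(z) = ∫ √t/(z−t) dν(t) = (1−p)√y/(z−y). (That is, the alternative multiplicative monotone convolution of a Dirac measure with a two-point measure, δ_x ▷̃ (pδ₀+(1−p)δ_y), equals p·δ₀ + (1−p)·δ_{y(p+x(1−p))}; this is the computation underlying the non-associativity of ▷̃.) -/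

import Mathlib

open MeasureTheory

/-- The Cauchy transform `G_ρ(z) = ∫ 1/(z−t) dρ(t)` of a measure on `ℝ`. -/
noncomputable def cauchyTransform (ρ : Measure ℝ) (z : ℂ) : ℂ := ∫ t, (z - (t : ℂ))⁻¹ ∂ρ

/-- The transform `W_ρ(z) = ∫ √t/(z−t) dρ(t)` of a measure on `ℝ`. -/
noncomputable def sqrtCauchyTransform (ρ : Measure ℝ) (z : ℂ) : ℂ :=
  ∫ t, (Real.sqrt t : ℂ) / (z - (t : ℂ)) ∂ρ

lemma integrable_dirac' (a : ℝ) (f : ℝ → ℂ) : Integrable f (Measure.dirac a) :=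
  (integrable_const (f a)).congr (ae_eq_dirac f).symm

lemma integral_two_point (p q : ℝ) (hp : 0 ≤ p) (hq : 0 ≤ q) (a b : ℝ) (f : ℝ → ℂ) :
    ∫ t, f t ∂(ENNReal.ofReal p • Measure.dirac a + ENNReal.ofReal q • Measure.dirac b)
      = p * f a + q * f b := by
  rw [integral_add_measure, integral_smul_measure, integral_smul_measure,
    integral_dirac, integral_dirac, ENNReal.toReal_ofReal hp, ENNReal.toReal_ofReal hq]
  · simp [smul_eq_mul]
  · exact (integrable_dirac' a f).smul_measure (by simp)
  · exact (integrable_dirac' b f).smul_measure (by simp)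

lemma sub_real_ne (z : ℂ) (hz : 0 < z.im) (r : ℝ) : z - (r : ℂ) ≠ 0 := by
  intro h
  have h2 : (z - (r:ℂ)).im = 0 := by rw [h]; simp
  simp at h2
  linarith

/-- The alternative multiplicative monotone convolution of a Dirac measure with a two-point
measure: `δ_x ▷̃ (pδ₀+(1−p)δ_y) = p·δ₀ + (1−p)·δ_{y(p+x(1−p))}`, expressed through the
defining Cauchy-transform identity. -/
theorem monotone_mult_alt_convolution_dirac_two_point
    (x y p : ℝ) (hx : 0 < x) (hy : 0 < y) (hp0 : 0 < p) (hp1 : p < 1) :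
    ∀ z : ℂ, 0 < z.im →
      (sqrtCauchyTransform (ENNReal.ofReal p • Measure.dirac 0 +
          ENNReal.ofReal (1 - p) • Measure.dirac y) z
        = ((1 - p : ℝ) : ℂ) * (Real.sqrt y : ℂ) / (z - (y : ℂ))) ∧
      cauchyTransform (ENNReal.ofReal p • Measure.dirac 0 +
          ENNReal.ofReal (1 - p) • Measure.dirac (y * (p + x * (1 - p)))) z
        = cauchyTransform (ENNReal.ofReal p • Measure.dirac 0 +
              ENNReal.ofReal (1 - p) • Measure.dirac y) z
          - (sqrtCauchyTransform (ENNReal.ofReal p • Measure.dirac 0 +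
                ENNReal.ofReal (1 - p) • Measure.dirac y) z) ^ 2 /
              (z * cauchyTransform (ENNReal.ofReal p • Measure.dirac 0 +
                ENNReal.ofReal (1 - p) • Measure.dirac y) z - 1)
          + (sqrtCauchyTransform (ENNReal.ofReal p • Measure.dirac 0 +
                ENNReal.ofReal (1 - p) • Measure.dirac y) z) ^ 2 /
              (z * cauchyTransform (ENNReal.ofReal p • Measure.dirac 0 +
                ENNReal.ofReal (1 - p) • Measure.dirac y) z - 1) ^ 2 *
              cauchyTransform (Measure.dirac x)
                (z * cauchyTransform (ENNReal.ofReal p • Measure.dirac 0 +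
                    ENNReal.ofReal (1 - p) • Measure.dirac y) z /
                  (z * cauchyTransform (ENNReal.ofReal p • Measure.dirac 0 +
                    ENNReal.ofReal (1 - p) • Measure.dirac y) z - 1)) := by
  intro z hz
  have hp : (0:ℝ) ≤ p := hp0.le
  have hq : (0:ℝ) ≤ 1 - p := by linarith
  have hz0 : z ≠ 0 := by simpa using sub_real_ne z hz 0
  have hzy : z - (y:ℂ) ≠ 0 := sub_real_ne z hz y
  have hzc : z - ((y * (p + x * (1 - p)) : ℝ) : ℂ) ≠ 0 := sub_real_ne z hz _
  have hqC : ((1 - p : ℝ) : ℂ) ≠ 0 := by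
    exact_mod_cast (by linarith : (1:ℝ) - p ≠ 0)
  have hyC : ((y:ℝ):ℂ) ≠ 0 := by exact_mod_cast hy.ne'
  -- value of G_ν
  have hGν : cauchyTransform (ENNReal.ofReal p • Measure.dirac 0 +
        ENNReal.ofReal (1 - p) • Measure.dirac y) z
      = (p:ℂ) * z⁻¹ + ((1-p:ℝ):ℂ) * (z - (y:ℂ))⁻¹ := by
    rw [cauchyTransform, integral_two_point p (1-p) hp hq]
    norm_num
  have hW : sqrtCauchyTransform (ENNReal.ofReal p • Measure.dirac 0 +
        ENNReal.ofReal (1 - p) • Measure.dirac y) z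
      = ((1 - p : ℝ) : ℂ) * (Real.sqrt y : ℂ) / (z - (y : ℂ)) := by
    rw [sqrtCauchyTransform, integral_two_point p (1-p) hp hq]
    simp [mul_div_assoc]
  refine ⟨hW, ?_⟩
  have hGlam : cauchyTransform (ENNReal.ofReal p • Measure.dirac 0 +
        ENNReal.ofReal (1 - p) • Measure.dirac (y * (p + x * (1 - p)))) z
      = (p:ℂ) * z⁻¹ + ((1-p:ℝ):ℂ) * (z - ((y * (p + x * (1 - p)) : ℝ):ℂ))⁻¹ := by
    rw [cauchyTransform, integral_two_point p (1-p) hp hq]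
    norm_num
  set G := cauchyTransform (ENNReal.ofReal p • Measure.dirac 0 +
        ENNReal.ofReal (1 - p) • Measure.dirac y) z with hGdef
  set W := sqrtCauchyTransform (ENNReal.ofReal p • Measure.dirac 0 +
        ENNReal.ofReal (1 - p) • Measure.dirac y) z with hWdef
  have hs : ((Real.sqrt y : ℝ):ℂ)^2 = (y:ℂ) := by
    rw [← Complex.ofReal_pow, Real.sq_sqrt hy.le]
  have hqyC : ((1-p:ℝ):ℂ) * (y:ℂ) ≠ 0 := mul_ne_zero hqC hyC
  have hD : z * G - 1 = ((1-p:ℝ):ℂ) * (y:ℂ) / (z - (y:ℂ)) := by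
    rw [hGν]; field_simp; push_cast; ring
  have hD0 : z * G - 1 ≠ 0 := by
    rw [hD]; exact div_ne_zero hqyC hzy
  have hzG : z * G = (z - ((p*y:ℝ):ℂ)) / (z - (y:ℂ)) := by
    rw [hGν]; push_cast; field_simp; ring
  have hw : z * G / (z * G - 1) = (z - ((p*y:ℝ):ℂ)) / (((1-p:ℝ):ℂ) * (y:ℂ)) := by
    rw [div_eq_div_iff hD0 hqyC, hD, hzG]
    push_cast
    field_simp
  have hwx : z * G / (z * G - 1) - (x:ℂ)
      = (z - ((y * (p + x * (1 - p)) : ℝ):ℂ)) / (((1-p:ℝ):ℂ) * (y:ℂ)) := by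
    rw [hw, eq_div_iff hqyC, sub_mul, div_mul_cancel₀ _ hqyC]; push_cast; ring
  have hGx : cauchyTransform (Measure.dirac x) (z * G / (z * G - 1))
      = (z * G / (z * G - 1) - (x:ℂ))⁻¹ := by
    rw [cauchyTransform, integral_dirac]
  have hT1 : W ^ 2 / (z * G - 1) = ((1-p:ℝ):ℂ) / (z - (y:ℂ)) := by
    rw [div_eq_div_iff hD0 hzy, hW, hD, div_pow, mul_pow, hs]
    field_simp
  have hT2 : W ^ 2 / (z * G - 1) ^ 2 = 1 / (y:ℂ) := by
    rw [div_eq_div_iff (pow_ne_zero 2 hD0) hyC, hW, hD, div_pow, mul_pow, hs, div_pow, mul_pow]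
    field_simp
  rw [hGlam, hGx, hwx, hT1, hT2, hGν, inv_div]
  push_cast
  field_simp
  ring
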